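/- For each l ∈ (0,∞), the function u_l(x) = √8·l/(1 + |lx|²) belongs to H¹_r(ℝ²) and satisfies (1/4)∫_{ℝ²} |u_l|⁴ dx = ∫_{ℝ²} |∇u_l|² dx = ∫_{ℝ²} (u_l(x)²/|x|²)(∫₀^{|x|} (s/2) u_l(s)² ds)² dx = 16πl²/3; in particular, equality is attained in the inequality ∫|u|⁴ ≤ 4(∫|∇u|²)^{1/2}(∫ (u²/|x|²)(∫₀^{|x|}(s/2)u²(s)ds)² dx)^{1/2} by each u_l. -/

import Mathlib

open MeasureTheory Filter Set

noncomputable section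

/-- The plane ℝ². -/
abbrev Plane : Type := EuclideanSpace ℝ (Fin 2)

/-- The point (s, 0) in the plane. -/
def pt (s : ℝ) : Plane := (EuclideanSpace.equiv (Fin 2) ℝ).symm ![s, 0]

/-- Radial profile of a function on the plane: `prof u s = u (s, 0)`. -/
def prof (u : Plane → ℝ) (s : ℝ) : ℝ := u (pt s)

/-- A function on the plane is radially symmetric. -/
def Radial (u : Plane → ℝ) : Prop := ∀ x y : Plane, ‖x‖ = ‖y‖ → u x = u y

/-- `h_u(s) = ∫₀ˢ (r/2) u(r)² dr`. -/
def hfun (u : Plane → ℝ) (s : ℝ) : ℝ := ∫ r in (0:ℝ)..s, r / 2 * (prof u r) ^ 2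

/-- `B(u) = ∫_{ℝ²} (u(x)²/|x|²) h_u(|x|)² dx`. -/
def Bfun (u : Plane → ℝ) : ℝ := ∫ x : Plane, (u x) ^ 2 / ‖x‖ ^ 2 * (hfun u ‖x‖) ^ 2

/-- The Fréchet derivative of `B` at `u` applied to `φ`. -/
def Bderiv (u φ : Plane → ℝ) : ℝ :=
  ∫ x : Plane, (2 * u x * φ x / ‖x‖ ^ 2 * (hfun u ‖x‖) ^ 2
    + (u x) ^ 2 / ‖x‖ ^ 2 * (2 * hfun u ‖x‖ * ∫ r in (0:ℝ)..‖x‖, r * prof u r * prof φ r))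

/-- Membership in `H¹_r(ℝ²)`: radially symmetric with `u` and `∇u` in `L²`. -/
def MemH1r (u : Plane → ℝ) : Prop :=
  Radial u ∧ MemLp u 2 (volume : Measure Plane) ∧
    MemLp (fun x => gradient u x) 2 (volume : Measure Plane)

/-- The squared `H¹` norm. -/
def H1normSq (u : Plane → ℝ) : ℝ :=
  (∫ x : Plane, ‖gradient u x‖ ^ 2) + ∫ x : Plane, (u x) ^ 2

/-- The `H¹` norm. -/
def H1norm (u : Plane → ℝ) : ℝ := Real.sqrt (H1normSq u)

/-- The `H¹` inner product. -/
def H1inner (u v : Plane → ℝ) : ℝ :=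
  (∫ x : Plane, (inner ℝ (gradient u x) (gradient v x) : ℝ)) + ∫ x : Plane, u x * v x

/-- Weak convergence in `H¹_r(ℝ²)`. -/
def WeakConvH1r (U : ℕ → Plane → ℝ) (u : Plane → ℝ) : Prop :=
  (∀ n, MemH1r (U n)) ∧ MemH1r u ∧
    ∀ φ, MemH1r φ → Tendsto (fun n => H1inner (U n) φ) atTop (nhds (H1inner u φ))

/-- Membership of a pair in `E = H¹_r × H¹_r`. -/
def MemE (u v : Plane → ℝ) : Prop := MemH1r u ∧ MemH1r v

/-- The squared `E`-norm: `∫ (|∇u|² + u² + |∇v|² + ω v²)`. -/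
def Enorm2 (ω : ℝ) (u v : Plane → ℝ) : ℝ :=
  ∫ x : Plane, (‖gradient u x‖ ^ 2 + (u x) ^ 2 + ‖gradient v x‖ ^ 2 + ω * (v x) ^ 2)

/-- `F(u,v) = ∫ (|u|^{2p} + |v|^{2p} + 2b|uv|^p)`. -/
def Ffun (b p : ℝ) (u v : Plane → ℝ) : ℝ :=
  ∫ x : Plane, (|u x| ^ (2 * p) + |v x| ^ (2 * p) + 2 * b * |u x * v x| ^ p)

/-- The energy functional `I` of the coupled system. -/
def Ifun (ω b p : ℝ) (u v : Plane → ℝ) : ℝ :=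
  Enorm2 ω u v / 2 + (Bfun u + Bfun v) / 2 - Ffun b p u v / (2 * p)

/-- The derivative `I'(u,v)(φ,ψ)`. -/
def Iprime (ω b p : ℝ) (u v φ ψ : Plane → ℝ) : ℝ :=
  (∫ x : Plane, ((inner ℝ (gradient u x) (gradient φ x) : ℝ) + u x * φ x
      + (inner ℝ (gradient v x) (gradient ψ x) : ℝ) + ω * v x * ψ x))
  + (Bderiv u φ + Bderiv v ψ) / 2
  - ∫ x : Plane, (|u x| ^ (2 * p - 2) * u x * φ x + |v x| ^ (2 * p - 2) * v x * ψ x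
      + b * |v x| ^ p * |u x| ^ (p - 2) * u x * φ x
      + b * |u x| ^ p * |v x| ^ (p - 2) * v x * ψ x)

/-- `(u,v)` is a (weak) solution of the coupled Chern–Simons–Schrödinger system (CSS),
i.e. a critical point of `I` on `E`. -/
def IsSolutionCSS (ω b p : ℝ) (u v : Plane → ℝ) : Prop :=
  MemH1r u ∧ MemH1r v ∧
    ∀ φ ψ : Plane → ℝ, MemH1r φ → MemH1r ψ → Iprime ω b p u v φ ψ = 0

/-- `u` is a nontrivial function. -/
def NontrivialFn (u : Plane → ℝ) : Prop := ¬ ∀ x, u x = 0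

/-- `(u,v)` is a ground state of (CSS): a nontrivial solution minimizing `I`
among all nontrivial solutions. -/
def IsGroundStateCSS (ω b p : ℝ) (u v : Plane → ℝ) : Prop :=
  IsSolutionCSS ω b p u v ∧ NontrivialFn u ∧ NontrivialFn v ∧
    ∀ u' v' : Plane → ℝ, IsSolutionCSS ω b p u' v' → NontrivialFn u' → NontrivialFn v' →
      Ifun ω b p u v ≤ Ifun ω b p u' v'

/-- The energy functional `J_ω` of the single equation `(S_ω)`. -/
def Jfun (ω p : ℝ) (u : Plane → ℝ) : ℝ :=
  (∫ x : Plane, (‖gradient u x‖ ^ 2 + ω * (u x) ^ 2)) / 2 + Bfun u / 2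
    - (∫ x : Plane, |u x| ^ (2 * p)) / (2 * p)

/-- The derivative `J_ω'(u)φ`. -/
def JprimeS (ω p : ℝ) (u φ : Plane → ℝ) : ℝ :=
  (∫ x : Plane, ((inner ℝ (gradient u x) (gradient φ x) : ℝ) + ω * u x * φ x))
    + Bderiv u φ / 2 - ∫ x : Plane, |u x| ^ (2 * p - 2) * u x * φ x

/-- `u` is a (weak) solution of the single equation `(S_ω)`, i.e. `J_ω'(u) = 0`. -/
def IsSolutionS (ω p : ℝ) (u : Plane → ℝ) : Prop :=
  MemH1r u ∧ ∀ φ : Plane → ℝ, MemH1r φ → JprimeS ω p u φ = 0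

/-- The Nehari manifold `N_ω` of the single equation (case `p > 3`). -/
def NehariS (ω p : ℝ) (u : Plane → ℝ) : Prop :=
  MemH1r u ∧ NontrivialFn u ∧
    (∫ x : Plane, (‖gradient u x‖ ^ 2 + ω * (u x) ^ 2)) + 3 * Bfun u
      = ∫ x : Plane, |u x| ^ (2 * p)

/-- The ground state level `E_ω = inf {J_ω(u) : u ∈ N_ω}` (case `p > 3`). -/
def Elevel (ω p : ℝ) : ℝ := sInf (Jfun ω p '' {u | NehariS ω p u})

/-- `‖u‖_{2p}^{2p} = ∫ |u|^{2p}`. -/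
def norm2p (p : ℝ) (u : Plane → ℝ) : ℝ := ∫ x : Plane, |u x| ^ (2 * p)

/-- The Nehari manifold `N` of the coupled system. -/
def NehariC (ω b p : ℝ) (u v : Plane → ℝ) : Prop :=
  MemE u v ∧ ¬ ((∀ x, u x = 0) ∧ (∀ x, v x = 0)) ∧
    Enorm2 ω u v + 3 * (Bfun u + Bfun v) = Ffun b p u v

/-- The ground state level `c_N = inf_{(u,v) ∈ N} I(u,v)`. -/
def cN (ω b p : ℝ) : ℝ := sInf {y | ∃ u v, NehariC ω b p u v ∧ y = Ifun ω b p u v}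

/-- The admissible range of the scaling parameter `α`. -/
def AlphaOK (p α : ℝ) : Prop :=
  (p < 3 → 1 / (p - 1) < α ∧ α < 1 / (3 - p)) ∧ (p = 3 → 1 < α)

/-- The scaling `t^α u(t ·)`. -/
def scaleFn (α t : ℝ) (u : Plane → ℝ) : Plane → ℝ := fun x => t ^ α * u (t • x)

/-- The Pohozaev–Nehari functional `J(u,v)` of the coupled system. -/
def Jc (ω b p α : ℝ) (u v : Plane → ℝ) : ℝ :=
  α * ((∫ x : Plane, ‖gradient u x‖ ^ 2) + ∫ x : Plane, ‖gradient v x‖ ^ 2)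
  + (α - 1) * ((∫ x : Plane, (u x) ^ 2) + ω * ∫ x : Plane, (v x) ^ 2)
  + (3 * α - 2) * (Bfun u + Bfun v) - (p * α - 1) / p * Ffun b p u v

/-- Membership in the Pohozaev–Nehari manifold `M_b`. -/
def MemMb (ω b p α : ℝ) (u v : Plane → ℝ) : Prop :=
  MemE u v ∧ ¬ ((∀ x, u x = 0) ∧ (∀ x, v x = 0)) ∧ Jc ω b p α u v = 0

/-- The level `c_b = inf_{(u,v) ∈ M_b} I(u,v)`. -/
def cb (ω b p α : ℝ) : ℝ := sInf {y | ∃ u v, MemMb ω b p α u v ∧ y = Ifun ω b p u v}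

/-- The Pohozaev–Nehari manifold `M_ω` of the single equation (case `p ∈ (2,3]`). -/
def Mω (ω p α : ℝ) (u : Plane → ℝ) : Prop :=
  MemH1r u ∧ NontrivialFn u ∧
    α * (∫ x : Plane, ‖gradient u x‖ ^ 2) + (α - 1) * ω * (∫ x : Plane, (u x) ^ 2)
      + (3 * α - 2) * Bfun u = (p * α - 1) / p * ∫ x : Plane, |u x| ^ (2 * p)

/-- The ground state level `Ẽ_ω = inf {J_ω(u) : u ∈ M_ω}` (case `p ∈ (2,3]`). -/
def Etilde (ω p α : ℝ) : ℝ := sInf (Jfun ω p '' {u | Mω ω p α u})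

/-- The set `S_ω` of ground states of the single equation at level `Ẽ_ω`. -/
def Sset (ω p α : ℝ) : Set (Plane → ℝ) :=
  {u | IsSolutionS ω p u ∧ NontrivialFn u ∧ Jfun ω p u = Etilde ω p α}

/-- The `δ`-neighborhood `(S_ω)^δ` of `S_ω` in `H¹_r(ℝ²)`. -/
def Sdelta (ω p α δ : ℝ) : Set (Plane → ℝ) :=
  {u | ∃ w ∈ Sset ω p α, H1norm (fun x => u x - w x) ≤ δ}

/-- The derivative `F'(u,v)(φ,ψ)` of `F`. -/
def Fprime (b p : ℝ) (u v φ ψ : Plane → ℝ) : ℝ :=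
  ∫ x : Plane, (2 * p * |u x| ^ (2 * p - 2) * u x * φ x
    + 2 * p * |v x| ^ (2 * p - 2) * v x * ψ x
    + 2 * b * p * (|v x| ^ p * |u x| ^ (p - 2) * u x * φ x
        + |u x| ^ p * |v x| ^ (p - 2) * v x * ψ x))

/-- The derivative `J'(u,v)(φ,ψ)` of the Pohozaev–Nehari functional. -/
def Jcprime (ω b p α : ℝ) (u v φ ψ : Plane → ℝ) : ℝ :=
  2 * α * (∫ x : Plane, ((inner ℝ (gradient u x) (gradient φ x) : ℝ)
      + (inner ℝ (gradient v x) (gradient ψ x) : ℝ)))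
  + 2 * (α - 1) * (∫ x : Plane, (u x * φ x + ω * v x * ψ x))
  + (3 * α - 2) * (Bderiv u φ + Bderiv v ψ) - (p * α - 1) / p * Fprime b p u v φ ψ

/-- The extremal functions `u_l(x) = √8 l / (1 + |lx|²)`. -/
def ulfn (l : ℝ) : Plane → ℝ := fun x => Real.sqrt 8 * l / (1 + ‖l • x‖ ^ 2)


namespace Stmt6Aux

open InnerProductSpace

theorem qpos (l : ℝ) (r : ℝ) : (0:ℝ) < 1 + l ^ 2 * r ^ 2 := by positivity

theorem qtend (l : ℝ) (hl : 0 < l) (n : ℕ) (hn : n ≠ 0) :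
    Tendsto (fun r : ℝ => ((1 + l ^ 2 * r ^ 2)⁻¹) ^ n) atTop (nhds 0) := by
  have h1 : Tendsto (fun r : ℝ => 1 + l ^ 2 * r ^ 2) atTop atTop := by
    apply tendsto_atTop_add_const_left
    exact (tendsto_pow_atTop (by norm_num)).const_mul_atTop (by positivity)
  have h2 := (tendsto_inv_atTop_zero.comp h1).pow n
  rw [zero_pow hn] at h2
  exact h2

theorem hql (l : ℝ) (r : ℝ) : HasDerivAt (fun r : ℝ => 1 + l ^ 2 * r ^ 2) (2 * l ^ 2 * r) r := by
  have := ((hasDerivAt_pow 2 r).const_mul (l ^ 2)).const_add 1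
  simpa using this.congr_deriv (by ring)

theorem I1 (l : ℝ) (hl : 0 < l) :
    ∫ r in Ioi (0:ℝ), r / (1 + l ^ 2 * r ^ 2) ^ 4 = 1 / (6 * l ^ 2) := by
  have key := integral_Ioi_of_hasDerivAt_of_nonneg'
    (g := fun r : ℝ => -(1 / (6 * l ^ 2)) * ((1 + l ^ 2 * r ^ 2)⁻¹) ^ 3)
    (g' := fun r : ℝ => r / (1 + l ^ 2 * r ^ 2) ^ 4) (a := 0) (l := 0)
    (fun r _ => by
      have h := (((hql l r).inv (qpos l r).ne').pow 3).const_mul (-(1 / (6 * l ^ 2)))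
      refine h.congr_deriv ?_
      have := (qpos l r).ne'
      norm_num only [Pi.inv_apply]
      field_simp
      ring)
    (fun r hr => div_nonneg (by nlinarith [mem_Ioi.mp hr]) (by positivity))
    (by
      have h := (qtend l hl 3 (by norm_num)).const_mul (-(1 / (6 * l ^ 2)))
      rw [mul_zero] at h; exact h)
  simpa using key

theorem I2 (l : ℝ) (hl : 0 < l) :
    ∫ r in Ioi (0:ℝ), r ^ 3 / (1 + l ^ 2 * r ^ 2) ^ 4 = 1 / (12 * l ^ 4) := by
  have key := integral_Ioi_of_hasDerivAt_of_nonneg'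
    (g := fun r : ℝ => -(1 / (4 * l ^ 4)) * ((1 + l ^ 2 * r ^ 2)⁻¹) ^ 2
      + (1 / (6 * l ^ 4)) * ((1 + l ^ 2 * r ^ 2)⁻¹) ^ 3)
    (g' := fun r : ℝ => r ^ 3 / (1 + l ^ 2 * r ^ 2) ^ 4) (a := 0) (l := 0)
    (fun r _ => by
      have h := ((((hql l r).inv (qpos l r).ne').pow 2).const_mul (-(1 / (4 * l ^ 4)))).add
        ((((hql l r).inv (qpos l r).ne').pow 3).const_mul (1 / (6 * l ^ 4)))
      refine h.congr_deriv ?_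
      have := (qpos l r).ne'
      norm_num only [Pi.inv_apply]
      field_simp
      ring)
    (fun r hr => div_nonneg (pow_nonneg (le_of_lt (mem_Ioi.mp hr)) 3) (by positivity))
    (by
      have h := ((qtend l hl 2 (by norm_num)).const_mul (-(1 / (4 * l ^ 4)))).add
        ((qtend l hl 3 (by norm_num)).const_mul (1 / (6 * l ^ 4)))
      rw [mul_zero, mul_zero, add_zero] at h; exact h)
  have hl4 : (l:ℝ) ^ 4 ≠ 0 := by positivity
  rw [key]
  norm_num
  field_simp
  ring

theorem planeInt (f : ℝ → ℝ) : ∫ x : Plane, f ‖x‖ = 2 * Real.pi * ∫ y in Ioi (0:ℝ), y * f y := by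
  rw [MeasureTheory.integral_fun_norm_addHaar (volume : Measure Plane) f]
  have h2 : Module.finrank ℝ Plane = 2 := by simp [finrank_euclideanSpace]
  rw [h2, measureReal_def, EuclideanSpace.volume_ball]
  have hπ : ((ENNReal.ofReal 1) ^ Fintype.card (Fin 2) *
      ENNReal.ofReal (Real.sqrt Real.pi ^ Fintype.card (Fin 2) /
        Real.Gamma (Fintype.card (Fin 2) / 2 + 1))).toReal = Real.pi := by
    norm_num [Real.Gamma_two, Real.sq_sqrt Real.pi_pos.le, ENNReal.toReal_ofReal Real.pi_pos.le]
  rw [hπ]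
  have : ∀ y : ℝ, y ^ (2-1) * f y = y * f y := fun y => by norm_num
  simp only [smul_eq_mul, nsmul_eq_mul, this]
  ring

theorem ul_eq (l : ℝ) (x : Plane) :
    ulfn l x = Real.sqrt 8 * l / (1 + l ^ 2 * ‖x‖ ^ 2) := by
  simp [ulfn, norm_smul, mul_pow, Real.norm_eq_abs, sq_abs]

theorem ul_grad (l : ℝ) (hl : 0 < l) (x : Plane) :
    HasGradientAt (ulfn l) ((-2 * Real.sqrt 8 * l ^ 3 / (1 + l ^ 2 * ‖x‖ ^ 2) ^ 2) • x) x := by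
  have hden : ∀ t : ℝ, 0 ≤ t → 0 < 1 + l ^ 2 * t := fun t ht => by positivity
  set ψ : ℝ → ℝ := fun t => Real.sqrt 8 * l / (1 + l ^ 2 * t) with hψdef
  have hψ : HasDerivAt ψ (-(Real.sqrt 8 * l * l ^ 2) / (1 + l ^ 2 * ⟪x, x⟫_ℝ) ^ 2) ⟪x, x⟫_ℝ := by
    have h1 : HasDerivAt (fun t : ℝ => 1 + l ^ 2 * t) (l ^ 2) ⟪x, x⟫_ℝ := by
      simpa using ((hasDerivAt_id _).const_mul (l ^ 2)).const_add 1
    have h2 := (hasDerivAt_const _ (Real.sqrt 8 * l)).div h1 (by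
      have := hden ⟪x, x⟫_ℝ (real_inner_self_nonneg); linarith)
    simpa [ψ, Pi.div_def] using h2
  have hg : HasFDerivAt (fun y : Plane => ⟪y, y⟫_ℝ)
      ((fderivInnerCLM ℝ (x, x)).comp ((ContinuousLinearMap.id ℝ Plane).prod
        (ContinuousLinearMap.id ℝ Plane))) x :=
    (hasFDerivAt_id x).inner ℝ (hasFDerivAt_id x)
  have hcomp := HasDerivAt.comp_hasFDerivAt (f := fun y : Plane => ⟪y, y⟫_ℝ) x hψ hg
  rw [hasGradientAt_iff_hasFDerivAt]
  have hfun : (ψ ∘ fun y : Plane => ⟪y, y⟫_ℝ) = ulfn l := by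
    funext y
    rw [Function.comp_apply, ul_eq l y, hψdef, real_inner_self_eq_norm_sq]
  rw [hfun] at hcomp
  refine hcomp.congr_fderiv ?_
  apply ContinuousLinearMap.ext
  intro v
  simp only [ContinuousLinearMap.smul_apply, ContinuousLinearMap.coe_comp', Function.comp_apply,
    ContinuousLinearMap.prod_apply, ContinuousLinearMap.coe_id', id_eq, fderivInnerCLM_apply,
    toDual_apply_apply, real_inner_smul_left, smul_eq_mul, real_inner_self_eq_norm_sq,
    real_inner_comm v x]
  ring

theorem h8 : (Real.sqrt 8 : ℝ) ^ 2 = 8 := Real.sq_sqrt (by norm_num)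

theorem grad_eq (l : ℝ) (hl : 0 < l) (x : Plane) :
    gradient (ulfn l) x = (-2 * Real.sqrt 8 * l ^ 3 / (1 + l ^ 2 * ‖x‖ ^ 2) ^ 2) • x :=
  (ul_grad l hl x).gradient

theorem grad_norm_sq (l : ℝ) (hl : 0 < l) (x : Plane) :
    ‖gradient (ulfn l) x‖ ^ 2 = 32 * l ^ 6 * ‖x‖ ^ 2 / (1 + l ^ 2 * ‖x‖ ^ 2) ^ 4 := by
  rw [grad_eq l hl x, norm_smul, mul_pow, Real.norm_eq_abs, sq_abs, div_pow, ← pow_mul]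
  rw [show (-2 * Real.sqrt 8 * l ^ 3) ^ 2 = 4 * (Real.sqrt 8 ^ 2) * l ^ 6 by ring, h8]
  ring

theorem usq (l : ℝ) (x : Plane) :
    (ulfn l x) ^ 2 = 8 * l ^ 2 / (1 + l ^ 2 * ‖x‖ ^ 2) ^ 2 := by
  rw [ul_eq l x, div_pow, show (Real.sqrt 8 * l) ^ 2 = Real.sqrt 8 ^ 2 * l ^ 2 by ring, h8]

theorem u_nonneg (l : ℝ) (hl : 0 < l) (x : Plane) : 0 ≤ ulfn l x := by
  rw [ul_eq l x]; positivity

theorem u4 (l : ℝ) (hl : 0 < l) (x : Plane) :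
    |ulfn l x| ^ (4:ℕ) = 64 * l ^ 4 / (1 + l ^ 2 * ‖x‖ ^ 2) ^ 4 := by
  rw [abs_of_nonneg (u_nonneg l hl x), show (4:ℕ) = 2*2 from rfl, pow_mul, usq l x, div_pow,
    ← pow_mul]
  norm_num
  ring

theorem norm_pt (s : ℝ) : ‖pt s‖ = |s| := by
  simp [pt, EuclideanSpace.norm_eq, Fin.sum_univ_two]
  rw [Real.sqrt_sq_eq_abs]

theorem prof_eq (l : ℝ) (r : ℝ) :
    prof (ulfn l) r = Real.sqrt 8 * l / (1 + l ^ 2 * r ^ 2) := by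
  rw [prof, ul_eq l, norm_pt, sq_abs]

theorem hfun_eq (l : ℝ) (s : ℝ) :
    hfun (ulfn l) s = 2 - 2 * (1 + l ^ 2 * s ^ 2)⁻¹ := by
  have hint : ∀ r : ℝ, r / 2 * (prof (ulfn l) r) ^ 2 = 4 * l ^ 2 * r / (1 + l ^ 2 * r ^ 2) ^ 2 :=
    fun r => by
      rw [prof_eq l r, div_pow,
        show (Real.sqrt 8 * l) ^ 2 = Real.sqrt 8 ^ 2 * l ^ 2 by ring, h8]
      field_simp
      ring
  rw [hfun, intervalIntegral.integral_congr (g := fun r => 4 * l ^ 2 * r / (1 + l ^ 2 * r ^ 2) ^ 2)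
    (fun r _ => hint r)]
  have hcont : Continuous fun r : ℝ => 4 * l ^ 2 * r / (1 + l ^ 2 * r ^ 2) ^ 2 :=
    Continuous.div (by continuity) (by continuity) (fun r => by positivity)
  rw [intervalIntegral.integral_eq_sub_of_hasDerivAt
    (f := fun r : ℝ => -2 * (1 + l ^ 2 * r ^ 2)⁻¹)
    (fun r _ => by
      have h := ((hql l r).inv (qpos l r).ne').const_mul (-2 : ℝ)
      refine h.congr_deriv ?_
      have := (qpos l r).ne'
      field_simp
      ring)
    (hcont.intervalIntegrable _ _)]
  norm_num
  ring

theorem Bcong (l : ℝ) (hl : 0 < l) (x : Plane) :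
    (ulfn l x) ^ 2 / ‖x‖ ^ 2 * (hfun (ulfn l) ‖x‖) ^ 2
      = 32 * l ^ 6 * ‖x‖ ^ 2 / (1 + l ^ 2 * ‖x‖ ^ 2) ^ 4 := by
  rw [usq l x, hfun_eq l]
  rcases eq_or_ne (‖x‖) 0 with h | h
  · rw [h]; norm_num
  · have h0 : (0:ℝ) < ‖x‖ := (norm_nonneg x).lt_of_ne' h
    have hq := (qpos l ‖x‖).ne'
    field_simp
    ring

theorem E_qint (l : ℝ) (hl : 0 < l) :
    ∫ x : Plane, 32 * l ^ 6 * ‖x‖ ^ 2 / (1 + l ^ 2 * ‖x‖ ^ 2) ^ 4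
      = 16 * Real.pi * l ^ 2 / 3 := by
  rw [planeInt (fun r => 32 * l ^ 6 * r ^ 2 / (1 + l ^ 2 * r ^ 2) ^ 4)]
  rw [show (fun y : ℝ => y * (32 * l ^ 6 * y ^ 2 / (1 + l ^ 2 * y ^ 2) ^ 4))
      = fun y : ℝ => 32 * l ^ 6 * (y ^ 3 / (1 + l ^ 2 * y ^ 2) ^ 4) from funext fun y => by ring]
  rw [MeasureTheory.integral_const_mul, I2 l hl]
  have : (l:ℝ) ^ 4 ≠ 0 := by positivity
  field_simp
  ring

theorem E_u4 (l : ℝ) (hl : 0 < l) :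
    ∫ x : Plane, |ulfn l x| ^ (4:ℕ) = 64 * Real.pi * l ^ 2 / 3 := by
  rw [show (fun x : Plane => |ulfn l x| ^ (4:ℕ))
      = fun x : Plane => 64 * l ^ 4 / (1 + l ^ 2 * ‖x‖ ^ 2) ^ 4 from funext (u4 l hl)]
  rw [planeInt (fun r => 64 * l ^ 4 / (1 + l ^ 2 * r ^ 2) ^ 4)]
  rw [show (fun y : ℝ => y * (64 * l ^ 4 / (1 + l ^ 2 * y ^ 2) ^ 4))
      = fun y : ℝ => 64 * l ^ 4 * (y / (1 + l ^ 2 * y ^ 2) ^ 4) from funext fun y => by ring]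
  rw [MeasureTheory.integral_const_mul, I1 l hl]
  have : (l:ℝ) ^ 2 ≠ 0 := by positivity
  field_simp
  ring

theorem E_grad (l : ℝ) (hl : 0 < l) :
    ∫ x : Plane, ‖gradient (ulfn l) x‖ ^ 2 = 16 * Real.pi * l ^ 2 / 3 := by
  rw [show (fun x : Plane => ‖gradient (ulfn l) x‖ ^ 2)
      = fun x : Plane => 32 * l ^ 6 * ‖x‖ ^ 2 / (1 + l ^ 2 * ‖x‖ ^ 2) ^ 4
      from funext (grad_norm_sq l hl)]
  exact E_qint l hl

theorem E_B (l : ℝ) (hl : 0 < l) : Bfun (ulfn l) = 16 * Real.pi * l ^ 2 / 3 := by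
  rw [Bfun, show (fun x : Plane => (ulfn l x) ^ 2 / ‖x‖ ^ 2 * (hfun (ulfn l) ‖x‖) ^ 2)
      = fun x : Plane => 32 * l ^ 6 * ‖x‖ ^ 2 / (1 + l ^ 2 * ‖x‖ ^ 2) ^ 4
      from funext (Bcong l hl)]
  exact E_qint l hl

theorem ucont (l : ℝ) : Continuous (ulfn l) := by
  rw [show ulfn l = fun x : Plane => Real.sqrt 8 * l / (1 + l ^ 2 * ‖x‖ ^ 2)
      from funext (ul_eq l)]
  exact Continuous.div continuous_const (by continuity) (fun x => (qpos l ‖x‖).ne')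

theorem usq_bound (l : ℝ) (hl : 0 < l) (x : Plane) :
    (ulfn l x) ^ 2 ≤ (32 * l ^ 2 / (min 1 (l ^ 2)) ^ 2) * (1 + ‖x‖) ^ (-(4:ℝ)) := by
  set t := ‖x‖ with ht'
  set m := min 1 (l ^ 2) with hm'
  have hm0 : 0 < m := lt_min one_pos (by positivity)
  have hm1 : m ≤ 1 := min_le_left _ _
  have hm2 : m ≤ l ^ 2 := min_le_right _ _
  have ht : 0 ≤ t := norm_nonneg x
  have hq : (0:ℝ) < 1 + l ^ 2 * t ^ 2 := qpos l t
  have h1 : m * (1 + t) ^ 2 ≤ 2 * (1 + l ^ 2 * t ^ 2) := by nlinarith [sq_nonneg (1 - t)]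
  have hrpow : (1 + t) ^ (-(4:ℝ)) = ((1 + t) ^ (4:ℕ))⁻¹ := by
    rw [← Real.rpow_natCast (1 + t) 4, ← Real.rpow_neg (by positivity)]
    norm_num
  have h2 : m ^ 2 * (1 + t) ^ 4 ≤ 4 * (1 + l ^ 2 * t ^ 2) ^ 2 := by
    nlinarith [h1, mul_nonneg hm0.le (sq_nonneg (1 + t)), sq_nonneg (1 + t), hq.le]
  have hr : 32 * l ^ 2 / m ^ 2 * ((1 + t) ^ (4:ℕ))⁻¹ = 32 * l ^ 2 / (m ^ 2 * (1 + t) ^ (4:ℕ)) := by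
    rw [division_def, division_def, mul_assoc, ← mul_inv]
  rw [usq l x, hrpow, hr, div_le_div_iff₀ (by positivity) (by positivity)]
  nlinarith [h2, sq_nonneg l, mul_nonneg (mul_nonneg (sq_nonneg m) (pow_nonneg (by linarith : (0:ℝ) ≤ 1 + t) 4)) (sq_nonneg l)]

theorem int_usq (l : ℝ) (hl : 0 < l) :
    Integrable (fun x : Plane => (ulfn l x) ^ 2) (volume : Measure Plane) := by
  apply Integrable.mono' ((integrable_one_add_norm (E := Plane) (μ := volume) (r := 4)
    (by norm_num [finrank_euclideanSpace])).const_mul (32 * l ^ 2 / (min 1 (l ^ 2)) ^ 2))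
  · exact ((ucont l).pow 2).aestronglyMeasurable
  · refine ae_of_all _ fun x => ?_
    rw [Real.norm_eq_abs, abs_of_nonneg (sq_nonneg _)]
    exact usq_bound l hl x

theorem gradcont (l : ℝ) (hl : 0 < l) : Continuous fun x : Plane => gradient (ulfn l) x := by
  rw [show (fun x : Plane => gradient (ulfn l) x)
      = fun x : Plane => (-2 * Real.sqrt 8 * l ^ 3 / (1 + l ^ 2 * ‖x‖ ^ 2) ^ 2) • x
      from funext (grad_eq l hl)]
  exact (Continuous.div continuous_const
    (by fun_prop : Continuous fun x : Plane => (1 + l ^ 2 * ‖x‖ ^ 2) ^ 2) fun x => by positivity).smul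
    continuous_id

theorem grad_bound (l : ℝ) (hl : 0 < l) (x : Plane) :
    ‖gradient (ulfn l) x‖ ^ 2 ≤ 4 * l ^ 2 * (ulfn l x) ^ 2 := by
  rw [grad_norm_sq l hl x, usq l x]
  set t := ‖x‖ with ht'
  have ht : 0 ≤ t := norm_nonneg x
  set q := 1 + l ^ 2 * t ^ 2 with hq'
  have hq0 : 0 < q := qpos l t
  have hq1 : 1 ≤ q := by nlinarith
  have h1 : l ^ 2 * t ^ 2 ≤ q := by nlinarith
  have h3 : l ^ 2 * t ^ 2 * q ^ 2 ≤ q * q ^ 2 := mul_le_mul_of_nonneg_right h1 (by positivity)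
  have h4 : q * q ^ 2 ≤ q ^ 4 := by nlinarith [mul_nonneg (pow_nonneg hq0.le 3) (sub_nonneg.mpr hq1)]
  rw [show 4 * l ^ 2 * (8 * l ^ 2 / q ^ 2) = 32 * l ^ 4 / q ^ 2 by ring,
    div_le_div_iff₀ (by positivity) (by positivity)]
  calc 32 * l ^ 6 * t ^ 2 * q ^ 2 = 32 * l ^ 4 * (l ^ 2 * t ^ 2 * q ^ 2) := by ring
    _ ≤ 32 * l ^ 4 * q ^ 4 :=
        mul_le_mul_of_nonneg_left (h3.trans h4) (by positivity)
    _ = 32 * l ^ 4 * q ^ 4 := rfl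

theorem int_gradsq (l : ℝ) (hl : 0 < l) :
    Integrable (fun x : Plane => ‖gradient (ulfn l) x‖ ^ 2) (volume : Measure Plane) := by
  apply Integrable.mono' ((int_usq l hl).const_mul (4 * l ^ 2))
  · exact ((gradcont l hl).norm.pow 2).aestronglyMeasurable
  · refine ae_of_all _ fun x => ?_
    rw [Real.norm_eq_abs, abs_of_nonneg (sq_nonneg _)]
    exact grad_bound l hl x

theorem memH1 (l : ℝ) (hl : 0 < l) : MemH1r (ulfn l) := by
  refine ⟨fun x y h => by rw [ul_eq, ul_eq, h], ?_, ?_⟩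
  · exact (memLp_two_iff_integrable_sq (ucont l).aestronglyMeasurable).2 (int_usq l hl)
  · exact (memLp_two_iff_integrable_sq_norm (gradcont l hl).aestronglyMeasurable).2
      (int_gradsq l hl)

end Stmt6Aux

/-- each `u_l`, `l > 0`, lies in `H¹_r(ℝ²)` and satisfies
`(1/4)∫|u_l|⁴ = ∫|∇u_l|² = B(u_l) = 16πl²/3`; in particular it attains equality
in the inequality of Lemma 2.2. -/
theorem stmt6 (l : ℝ) (hl : 0 < l) :
    MemH1r (ulfn l) ∧
    (1 / 4) * (∫ x : Plane, |ulfn l x| ^ (4:ℕ)) = (∫ x : Plane, ‖gradient (ulfn l) x‖ ^ 2) ∧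
    (∫ x : Plane, ‖gradient (ulfn l) x‖ ^ 2) = Bfun (ulfn l) ∧
    Bfun (ulfn l) = 16 * Real.pi * l ^ 2 / 3 ∧
    (∫ x : Plane, |ulfn l x| ^ (4:ℕ))
      = 4 * Real.sqrt (∫ x : Plane, ‖gradient (ulfn l) x‖ ^ 2) * Real.sqrt (Bfun (ulfn l)) := by
  open Stmt6Aux in
  refine ⟨memH1 l hl, ?_, ?_, E_B l hl, ?_⟩
  · rw [E_u4 l hl, E_grad l hl]; ring
  · rw [E_grad l hl, E_B l hl]
  · rw [E_u4 l hl, E_grad l hl, E_B l hl,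
      show (4:ℝ) * Real.sqrt (16 * Real.pi * l ^ 2 / 3) * Real.sqrt (16 * Real.pi * l ^ 2 / 3)
        = 4 * (16 * Real.pi * l ^ 2 / 3) by
          rw [mul_assoc, Real.mul_self_sqrt (by positivity)]]
    ring
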